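/- Let n ≥ 1, let 0 ≤ k ≤ n, and let f be an affine permutation of quasi-period n. Then the following are equivalent: (i) there exists m ∈ ℤ such that the bijection g : ℤ → ℤ defined by g(i) = f(i) − m satisfies i ≤ g(i) ≤ i + n for all i ∈ ℤ and #{i ∈ {1,…,n} : g(i) > n} = k; (ii) c_i(f) ≤ n − k and c_i(f⁻¹) ≤ k for all i ∈ ℤ. -/

import Mathlib

namespace Stmt0Aux


lemma per (n : ℕ) (f : ℤ ≃ ℤ) (hf : ∀ i : ℤ, f (i + n) = f i + n) :
    ∀ (q i : ℤ), f (i + q * n) = f i + q * n := by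
  have hsub : ∀ i : ℤ, f (i - n) = f i - n := by
    intro i
    have := hf (i - n)
    simp at this
    omega
  intro q
  induction q using Int.induction_on with
  | zero => simp
  | succ q ih =>
    intro i
    have h1 : i + ((q : ℤ) + 1) * n = (i + q * n) + n := by ring
    rw [h1, hf, ih]; ring
  | pred q ih =>
    intro i
    have h1 : i + (-(q : ℤ) - 1) * n = (i + (-q) * n) - n := by ring
    rw [h1, hsub, ih]; ring

/-- reduce any index to the window [1, n] with the same displacement -/
lemma reduce (n : ℕ) (hn : 1 ≤ n) (f : ℤ ≃ ℤ) (hf : ∀ i : ℤ, f (i + n) = f i + n) (i : ℤ) :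
    ∃ j ∈ Finset.Icc (1 : ℤ) n, f i - i = f j - j := by
  have hn0 : (0 : ℤ) < n := by exact_mod_cast hn
  set q := (i - 1) / n with hq
  set r := (i - 1) % n with hr
  have hdiv : (n : ℤ) * q + r = i - 1 := Int.mul_ediv_add_emod (i - 1) n
  have hr0 : 0 ≤ r := Int.emod_nonneg _ (by omega)
  have hrn : r < n := Int.emod_lt_of_pos _ hn0
  refine ⟨r + 1, by simp [Finset.mem_Icc]; omega, ?_⟩
  have : i = (r + 1) + q * n := by rw [mul_comm (q : ℤ) (n : ℤ)]; omega
  rw [this, per n f hf q (r + 1)]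
  ring



/-- Key counting lemma: for `a < b` with `f b < f a`, the row code at `a` plus the
column code at `b` is at least `(f a - f b) + (b - a)`. -/
lemma key (f : ℤ ≃ ℤ) (a b : ℤ) (hab : a < b) (hfab : f b < f a)
    (FA FB : Finset ℤ)
    (hFA : ∀ j, j ∈ FA ↔ a < j ∧ f j < f a)
    (hFB : ∀ u, u ∈ FB ↔ u < b ∧ f b < f u) :
    (f a - f b).toNat + (b - a).toNat ≤ FA.card + FB.card := by
  classical
  set D : Finset (ℤ ⊕ ℤ) := (Finset.Ico (f b) (f a)).disjSum (Finset.Ico a b) with hD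
  set T : Finset (ℤ ⊕ ℤ) := FA.disjSum FB with hT
  have hcardD : D.card = (f a - f b).toNat + (b - a).toNat := by
    simp [hD, Finset.card_disjSum, Int.card_Ico]
  have hcardT : T.card = FA.card + FB.card := by
    simp [hT, Finset.card_disjSum]
  rw [← hcardD, ← hcardT]
  set Φ : ℤ ⊕ ℤ → ℤ ⊕ ℤ := fun x =>
    match x with
    | .inl v => if a < f.symm v then .inl (f.symm v) else .inr (f.symm v)
    | .inr u => if f u < f b then .inl u else .inr u with hΦ
  apply Finset.card_le_card_of_injOn Φ
  · -- maps to
    intro x hx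
    rw [Finset.mem_coe] at hx ⊢
    match x with
    | .inl v =>
      rw [hD, Finset.inl_mem_disjSum, Finset.mem_Ico] at hx
      by_cases h : a < f.symm v
      · have : Φ (.inl v) = .inl (f.symm v) := by simp [hΦ, h]
        rw [this, hT, Finset.inl_mem_disjSum, hFA]
        refine ⟨h, ?_⟩
        rw [Equiv.apply_symm_apply]; exact hx.2
      · have : Φ (.inl v) = .inr (f.symm v) := by simp [hΦ, h]
        rw [this, hT, Finset.inr_mem_disjSum, hFB]
        push_neg at h
        constructor
        · omega
        · rw [Equiv.apply_symm_apply]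
          rcases lt_or_eq_of_le hx.1 with h' | h'
          · exact h'
          · exfalso
            have : f.symm v = b := by rw [← h']; simp
            omega
    | .inr u =>
      rw [hD, Finset.inr_mem_disjSum, Finset.mem_Ico] at hx
      by_cases h : f u < f b
      · have : Φ (.inr u) = .inl u := by simp [hΦ, h]
        rw [this, hT, Finset.inl_mem_disjSum, hFA]
        constructor
        · rcases lt_or_eq_of_le hx.1 with h' | h'
          · exact h'
          · exfalso; rw [← h'] at h; omega
        · omega
      · have : Φ (.inr u) = .inr u := by simp [hΦ, h]
        rw [this, hT, Finset.inr_mem_disjSum, hFB]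
        push_neg at h
        refine ⟨hx.2, ?_⟩
        rcases lt_or_eq_of_le h with h' | h'
        · exact h'
        · exfalso
          have : b = u := f.injective h'
          omega
  · -- injective on D
    intro x hx y hy hxy
    rw [Finset.mem_coe] at hx hy
    match x, y with
    | .inl v₁, .inl v₂ =>
      simp only [hΦ] at hxy
      split_ifs at hxy <;> simp_all
    | .inl v, .inr u =>
      exfalso
      rw [hD, Finset.inl_mem_disjSum, Finset.mem_Ico] at hx
      rw [hD, Finset.inr_mem_disjSum, Finset.mem_Ico] at hy
      simp only [hΦ] at hxy
      split_ifs at hxy with h1 h2 h2 <;> simp_all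
      · rw [← hxy, Equiv.apply_symm_apply] at h2
        omega
      · have hua : u = a := le_antisymm h1 hy.1
        have hv : v = f a := by rw [← hua, ← hxy]; simp
        omega
    | .inr u, .inl v =>
      exfalso
      rw [hD, Finset.inr_mem_disjSum, Finset.mem_Ico] at hx
      rw [hD, Finset.inl_mem_disjSum, Finset.mem_Ico] at hy
      simp only [hΦ] at hxy
      split_ifs at hxy with h1 h2 h2 <;> simp_all
      · omega
      · have hua : f.symm v = a := le_antisymm h2 hx.1
        have hv : v = f a := by rw [← hua]; simp
        omega
    | .inr u₁, .inr u₂ =>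
      simp only [hΦ] at hxy
      split_ifs at hxy <;> simp_all



/-- window count: number of `j ∈ (x-n, x]` with `f j > x + m` -/
noncomputable def Sm (n : ℕ) (f : ℤ ≃ ℤ) (m x : ℤ) : Finset ℤ :=
  (Finset.Ioc (x - n) x).filter fun j => x + m < f j

lemma Sm_step (n : ℕ) (hn : 1 ≤ n) (f : ℤ ≃ ℤ) (m : ℤ)
    (hb : ∀ i : ℤ, i + m ≤ f i ∧ f i ≤ i + n + m) (x : ℤ) :
    (Sm n f m x).card = (Sm n f m (x + 1)).card := by
  classical
  set w := f.symm (x + 1 + m) with hw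
  have hfw : f w = x + 1 + m := by simp [hw]
  have hw1 : w ≤ x + 1 := by have := (hb w).1; omega
  have hw2 : x + 1 - n ≤ w := by have := (hb w).2; omega
  apply Finset.card_bij (fun j _ => if j = w then x + 1 else j)
  · intro j hj
    simp only [Sm, Finset.mem_filter, Finset.mem_Ioc] at hj
    by_cases h : j = w
    · subst h
      rw [if_pos rfl]
      simp only [Sm, Finset.mem_filter, Finset.mem_Ioc]
      have hfx1 : x + 1 + m ≤ f (x + 1) := (hb (x + 1)).1
      have hne : f (x + 1) ≠ x + 1 + m := by
        intro he
        have : x + 1 = w := by rw [hw, ← he]; simp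
        omega
      refine ⟨⟨by omega, le_refl _⟩, by omega⟩
    · rw [if_neg h]
      simp only [Sm, Finset.mem_filter, Finset.mem_Ioc]
      have hfj : f j ≠ x + 1 + m := by
        intro he
        exact h (by rw [hw, ← he]; simp)
      have hub : f j ≤ j + n + m := (hb j).2
      refine ⟨⟨by omega, by omega⟩, by omega⟩
  · intro j₁ hj₁ j₂ hj₂ he
    simp only [Sm, Finset.mem_filter, Finset.mem_Ioc] at hj₁ hj₂
    split_ifs at he with e1 e2 e2 <;> omega
  · intro j' hj'
    simp only [Sm, Finset.mem_filter, Finset.mem_Ioc] at hj'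
    have hj'w : j' ≠ w := by
      intro he
      rw [he, hfw] at hj'
      omega
    by_cases h : j' = x + 1
    · have hwx : w ≤ x := by
        rcases lt_or_eq_of_le hw1 with h' | h'
        · omega
        · exfalso; rw [← h] at h'; exact hj'w h'.symm
      refine ⟨w, ?_, by simp [h]⟩
      simp only [Sm, Finset.mem_filter, Finset.mem_Ioc]
      refine ⟨⟨by omega, hwx⟩, by omega⟩
    · refine ⟨j', ?_, by simp [hj'w]⟩
      simp only [Sm, Finset.mem_filter, Finset.mem_Ioc]
      have hub : f j' ≤ j' + n + m := (hb j').2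
      refine ⟨⟨by omega, by omega⟩, by omega⟩

lemma Sm_const (n : ℕ) (hn : 1 ≤ n) (f : ℤ ≃ ℤ) (m : ℤ)
    (hb : ∀ i : ℤ, i + m ≤ f i ∧ f i ≤ i + n + m) (x y : ℤ) :
    (Sm n f m x).card = (Sm n f m y).card := by
  suffices h : ∀ z : ℤ, (Sm n f m z).card = (Sm n f m 0).card by
    rw [h x, h y]
  intro z
  induction z using Int.induction_on with
  | zero => rfl
  | succ i ih => rw [← Sm_step n hn f m hb i, ih]
  | pred i ih =>
    have := Sm_step n hn f m hb (-(i : ℤ) - 1)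
    simp only [sub_add_cancel] at this
    rw [this, ih]

/-- the count in the statement equals the window count at `n` -/
lemma count_eq_Sm (n : ℕ) (f : ℤ ≃ ℤ) (m : ℤ) :
    ((Finset.Icc (1 : ℤ) n).filter fun i => (n : ℤ) < f i - m).card
      = (Sm n f m n).card := by
  congr 1
  ext i
  simp only [Sm, Finset.mem_filter, Finset.mem_Icc, Finset.mem_Ioc]
  omega




lemma img (f : ℤ ≃ ℤ) (p : ℤ) :
    f '' {u : ℤ | u < p ∧ f p < f u} = {j : ℤ | f p < j ∧ f.symm j < p} := by
  ext j
  simp only [Set.mem_image, Set.mem_setOf_eq]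
  constructor
  · rintro ⟨u, ⟨h1, h2⟩, rfl⟩
    exact ⟨h2, by simpa using h1⟩
  · rintro ⟨h1, h2⟩
    exact ⟨f.symm j, ⟨h2, by simpa using h1⟩, by simp⟩

lemma row_bound (n k : ℕ) (hn : 1 ≤ n) (f : ℤ ≃ ℤ) (hf : ∀ i : ℤ, f (i + n) = f i + n) (m : ℤ)
    (hb : ∀ i : ℤ, i + m ≤ f i ∧ f i ≤ i + n + m)
    (hcard : ∀ x : ℤ, (Sm n f m x).card = k) (i : ℤ) :
    {j : ℤ | i < j ∧ f j < f i}.ncard ≤ n - k := by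
  classical
  rcases eq_or_lt_of_le (hb i).1 with h | h
  · have : {j : ℤ | i < j ∧ f j < f i} = ∅ := by
      ext j
      simp only [Set.mem_setOf_eq, Set.mem_empty_iff_false, iff_false, not_and]
      intro hij
      have := (hb j).1
      omega
    rw [this, Set.ncard_empty]
    omega
  · set AF : Finset ℤ := (Finset.Ioo i (i + n)).filter (fun j => f j < f i) with hAF
    have hset : {j : ℤ | i < j ∧ f j < f i} = ↑AF := by
      ext j
      simp only [Set.mem_setOf_eq, hAF, Finset.coe_filter, Finset.mem_Ioo, Set.mem_setOf_eq]
      have h1 := (hb j).1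
      have h2 := (hb i).2
      constructor
      · rintro ⟨hj1, hj2⟩; exact ⟨⟨hj1, by omega⟩, hj2⟩
      · rintro ⟨⟨hj1, _⟩, hj2⟩; exact ⟨hj1, hj2⟩
    set W : Finset ℤ := (Sm n f m (i + n)).erase (i + n) with hWdef
    have hmem : i + n ∈ Sm n f m (i + n) := by
      simp only [Sm, Finset.mem_filter, Finset.mem_Ioc]
      rw [hf i]
      refine ⟨⟨by omega, le_refl _⟩, by omega⟩
    have hk1 : 1 ≤ k := by
      rw [← hcard (i + n)]
      exact Finset.card_pos.2 ⟨i + n, hmem⟩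
    have hWcard : W.card = k - 1 := by
      rw [hWdef, Finset.card_erase_of_mem hmem, hcard (i + n)]
    have hWsub : W ⊆ Finset.Ioo i (i + n) := by
      intro j hj
      rw [hWdef, Finset.mem_erase] at hj
      obtain ⟨hne, hj⟩ := hj
      simp only [Sm, Finset.mem_filter, Finset.mem_Ioc] at hj
      have := (hb j).2
      simp only [Finset.mem_Ioo]
      omega
    have hdisj : Disjoint AF W := by
      rw [Finset.disjoint_left]
      intro j hjA hjW
      rw [hAF, Finset.mem_filter] at hjA
      rw [hWdef, Finset.mem_erase] at hjW
      simp only [Sm, Finset.mem_filter] at hjW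
      have := (hb i).2
      omega
    have hsub : AF ∪ W ⊆ Finset.Ioo i (i + n) := by
      intro j hj
      rcases Finset.mem_union.1 hj with h' | h'
      · exact Finset.mem_filter.1 h' |>.1
      · exact hWsub h'
    have hcardle : AF.card + W.card ≤ n - 1 := by
      have h1 : (AF ∪ W).card = AF.card + W.card := Finset.card_union_of_disjoint hdisj
      have h2 : (AF ∪ W).card ≤ (Finset.Ioo i (i + n)).card := Finset.card_le_card hsub
      have h3 : (Finset.Ioo i (i + n)).card = n - 1 := by
        rw [Int.card_Ioo]
        omega
      omega
    rw [hset, Set.ncard_coe_finset]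
    omega

lemma col_bound (n k : ℕ) (f : ℤ ≃ ℤ) (m : ℤ)
    (hb : ∀ i : ℤ, i + m ≤ f i ∧ f i ≤ i + n + m)
    (hcard : ∀ x : ℤ, (Sm n f m x).card = k) (i : ℤ) :
    {j : ℤ | i < j ∧ f.symm j < f.symm i}.ncard ≤ k := by
  classical
  set p := f.symm i with hp
  have hi : f p = i := by simp [hp]
  have hseteq : {j : ℤ | i < j ∧ f.symm j < f.symm i} = f '' {u : ℤ | u < p ∧ f p < f u} := by
    rw [img f p, hi, ← hp]
  rw [hseteq, Set.ncard_image_of_injective _ f.injective]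
  have hsub : {u : ℤ | u < p ∧ f p < f u} ⊆ ↑(Sm n f m p) := by
    intro u hu
    obtain ⟨h1, h2⟩ := hu
    simp only [Finset.coe_filter, Sm, Finset.mem_Ioc, Set.mem_setOf_eq, Finset.mem_coe,
      Finset.mem_filter]
    have hu2 := (hb u).2
    have hp1 := (hb p).1
    refine ⟨⟨by omega, by omega⟩, by omega⟩
  calc {u : ℤ | u < p ∧ f p < f u}.ncard ≤ (↑(Sm n f m p) : Set ℤ).ncard :=
        Set.ncard_le_ncard hsub (Finset.finite_toSet _)
    _ = k := by rw [Set.ncard_coe_finset, hcard p]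



lemma ivt (k : ℕ) (h : ℤ → ℕ) (hstep : ∀ z : ℤ, h z ≤ h (z + 1) + 1) :
    ∀ (N : ℕ) (x y : ℤ), x ≤ y → (y - x).toNat ≤ N → h y ≤ k → k ≤ h x →
      ∃ m, x ≤ m ∧ m ≤ y ∧ h m = k := by
  intro N
  induction N with
  | zero =>
    intro x y hxy hN hy hx
    have hxeq : x = y := by omega
    subst hxeq
    exact ⟨x, le_refl _, le_refl _, le_antisymm hy hx⟩
  | succ N ih =>
    intro x y hxy hN hy hx
    by_cases he : h x = k
    · exact ⟨x, le_refl _, hxy, he⟩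
    · have hlt : k < h x := lt_of_le_of_ne hx (Ne.symm he)
      have hxy' : x < y := by
        rcases lt_or_eq_of_le hxy with h' | h'
        · exact h'
        · exfalso; rw [h'] at hlt; omega
      have hs := hstep x
      obtain ⟨m, hm1, hm2, hm3⟩ := ih (x + 1) y (by omega) (by omega) hy (by omega)
      exact ⟨m, by omega, hm2, hm3⟩

lemma cstep (n : ℕ) (f : ℤ ≃ ℤ) (m : ℤ) :
    ((Finset.Icc (1 : ℤ) n).filter fun i => (n : ℤ) < f i - m).card ≤
      ((Finset.Icc (1 : ℤ) n).filter fun i => (n : ℤ) < f i - (m + 1)).card + 1 := by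
  classical
  have hsub : ((Finset.Icc (1 : ℤ) n).filter fun i => (n : ℤ) < f i - m) ⊆
      ((Finset.Icc (1 : ℤ) n).filter fun i => (n : ℤ) < f i - (m + 1)) ∪
        ((Finset.Icc (1 : ℤ) n).filter fun i => f i = n + m + 1) := by
    intro i hi
    rw [Finset.mem_filter] at hi
    rw [Finset.mem_union, Finset.mem_filter, Finset.mem_filter]
    by_cases h : f i = n + m + 1
    · exact Or.inr ⟨hi.1, h⟩
    · exact Or.inl ⟨hi.1, by omega⟩
  have h1 := Finset.card_le_card hsub
  have h2 := Finset.card_union_le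
    ((Finset.Icc (1 : ℤ) n).filter fun i => (n : ℤ) < f i - (m + 1))
    ((Finset.Icc (1 : ℤ) n).filter fun i => f i = n + m + 1)
  have h3 : ((Finset.Icc (1 : ℤ) n).filter fun i => f i = n + m + 1).card ≤ 1 := by
    have : ((Finset.Icc (1 : ℤ) n).filter fun i => f i = n + m + 1) ⊆ {f.symm (n + m + 1)} := by
      intro i hi
      rw [Finset.mem_filter] at hi
      rw [Finset.mem_singleton, ← hi.2]
      simp
    calc _ ≤ ({f.symm (n + m + 1)} : Finset ℤ).card := Finset.card_le_card this
      _ = 1 := Finset.card_singleton _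
  omega


lemma ncard_colset (f : ℤ ≃ ℤ) (b : ℤ) :
    {u : ℤ | u < b ∧ f b < f u}.ncard
      = {j : ℤ | f b < j ∧ f.symm j < f.symm (f b)}.ncard := by
  simp only [Equiv.symm_apply_apply]
  rw [← Stmt0Aux.img f b, Set.ncard_image_of_injective _ f.injective]

end Stmt0Aux

/-- For an affine permutation `f` of quasi-period `n` and `0 ≤ k ≤ n`:
`f` is an integer shift of a bounded affine permutation with exactly `k` of the
values `g 1, …, g n` exceeding `n`, if and only if every row of the Rothe diagram
has at most `n - k` cells (`cᵢ(f) ≤ n - k`) and every column has at most `k`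
cells (`cᵢ(f⁻¹) ≤ k`). -/
theorem stmt0 (n k : ℕ) (hn : 1 ≤ n) (hk : k ≤ n) (f : ℤ ≃ ℤ)
    (hf : ∀ i : ℤ, f (i + n) = f i + n) :
    (∃ m : ℤ, (∀ i : ℤ, i ≤ f i - m ∧ f i - m ≤ i + n) ∧
        ((Finset.Icc (1 : ℤ) n).filter fun i => (n : ℤ) < f i - m).card = k) ↔
      ∀ i : ℤ, {j : ℤ | i < j ∧ f j < f i}.ncard ≤ n - k ∧
        {j : ℤ | i < j ∧ f.symm j < f.symm i}.ncard ≤ k := by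
  classical
  constructor
  · rintro ⟨m, hbm, hcnt⟩
    have hb : ∀ i : ℤ, i + m ≤ f i ∧ f i ≤ i + n + m := by
      intro i
      have h1 := (hbm i).1
      have h2 := (hbm i).2
      constructor <;> omega
    have hcard : ∀ x : ℤ, (Stmt0Aux.Sm n f m x).card = k := by
      intro x
      rw [Stmt0Aux.Sm_const n hn f m hb x n, ← Stmt0Aux.count_eq_Sm n f m]
      exact hcnt
    intro i
    exact ⟨Stmt0Aux.row_bound n k hn f hf m hb hcard i,
      Stmt0Aux.col_bound n k f m hb hcard i⟩
  · intro H
    have hne : (Finset.Icc (1 : ℤ) n).Nonempty := ⟨1, by simp; exact_mod_cast hn⟩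
    obtain ⟨a, ha, hamax⟩ := Finset.exists_max_image (Finset.Icc (1 : ℤ) n) (fun i => f i - i) hne
    obtain ⟨b, hbm, hbmin⟩ := Finset.exists_min_image (Finset.Icc (1 : ℤ) n) (fun i => f i - i) hne
    set s := f a - a with hs
    set t := f b - b with ht
    have hts : ∀ i : ℤ, t ≤ f i - i ∧ f i - i ≤ s := by
      intro i
      obtain ⟨j, hj, hj2⟩ := Stmt0Aux.reduce n hn f hf i
      rw [hj2]
      exact ⟨hbmin j hj, hamax j hj⟩
    set FA : Finset ℤ := (Finset.Ioo a (f a - t)).filter (fun j => f j < f a) with hFAdef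
    have hFA : ∀ j, j ∈ FA ↔ a < j ∧ f j < f a := by
      intro j
      simp only [hFAdef, Finset.mem_filter, Finset.mem_Ioo]
      have := (hts j).1
      constructor
      · rintro ⟨⟨h1, _⟩, h2⟩; exact ⟨h1, h2⟩
      · rintro ⟨h1, h2⟩; exact ⟨⟨h1, by omega⟩, h2⟩
    have hFAset : {j : ℤ | a < j ∧ f j < f a} = ↑FA := by
      ext j; simp only [Set.mem_setOf_eq, Finset.mem_coe, hFA]
    have hFAcard : FA.card ≤ n - k := by
      have := (H a).1
      rwa [hFAset, Set.ncard_coe_finset] at this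
    -- Step 1: s - t ≤ n
    have hDle : s - t ≤ n := by
      by_contra hD
      push_neg at hD
      set b' := if a < b then b else b + n with hb'def
      have hab : a ≠ b := by
        intro he
        rw [he] at hs
        omega
      have hb'1 : a < b' := by
        rw [hb'def]
        split_ifs with h'
        · exact h'
        · simp only [Finset.mem_Icc] at ha hbm
          omega
      have hb'2 : b' - a ≤ n := by
        rw [hb'def]
        split_ifs with h' <;> simp only [Finset.mem_Icc] at ha hbm <;> omega
      have hfb' : f b' - b' = t := by
        rw [hb'def]
        split_ifs with h'
        · rfl
        · rw [hf b]
          omega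
      have hfab : f b' < f a := by omega
      set FB : Finset ℤ := (Finset.Ioo (f b' - s) b').filter (fun u => f b' < f u) with hFBdef
      have hFB : ∀ u, u ∈ FB ↔ u < b' ∧ f b' < f u := by
        intro u
        simp only [hFBdef, Finset.mem_filter, Finset.mem_Ioo]
        have := (hts u).2
        constructor
        · rintro ⟨⟨_, h1⟩, h2⟩; exact ⟨h1, h2⟩
        · rintro ⟨h1, h2⟩; exact ⟨⟨by omega, h1⟩, h2⟩
      have hkey := Stmt0Aux.key f a b' hb'1 hfab FA FB hFA hFB
      have hFBcard : FB.card ≤ k := by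
        have h3 := (H (f b')).2
        rw [← Stmt0Aux.ncard_colset f b'] at h3
        have hset : {u : ℤ | u < b' ∧ f b' < f u} = ↑FB := by
          ext u; simp only [Set.mem_setOf_eq, Finset.mem_coe, hFB]
        rwa [hset, Set.ncard_coe_finset] at h3
      omega
    -- boundedness for any shift in [s - n, t]
    have hbnd : ∀ m : ℤ, s - n ≤ m → m ≤ t → ∀ i : ℤ, i + m ≤ f i ∧ f i ≤ i + n + m := by
      intro m h1 h2 i
      have := hts i
      constructor <;> omega
    -- endpoint 1 : the count at shift t is at most k
    have hct : ((Finset.Icc (1 : ℤ) n).filter fun i => (n : ℤ) < f i - t).card ≤ k := by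
      rw [Stmt0Aux.count_eq_Sm n f t,
        Stmt0Aux.Sm_const n hn f t (hbnd t (by omega) (le_refl t)) n b]
      have hSb : ↑(Stmt0Aux.Sm n f t b) = {u : ℤ | u < b ∧ f b < f u} := by
        ext u
        simp only [Stmt0Aux.Sm, Finset.coe_filter, Set.mem_setOf_eq, Finset.mem_Ioc]
        constructor
        · rintro ⟨⟨h1, h2⟩, h3⟩
          refine ⟨?_, by omega⟩
          rcases lt_or_eq_of_le h2 with h4 | h4
          · exact h4
          · exfalso; rw [h4] at h3; omega
        · rintro ⟨h1, h2⟩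
          have h3 := (hts u).2
          refine ⟨⟨by omega, by omega⟩, by omega⟩
      have h4 := (H (f b)).2
      rw [← Stmt0Aux.ncard_colset f b] at h4
      rw [← Set.ncard_coe_finset, hSb]
      exact h4
    -- endpoint 2 : the count at shift s - n is at least k
    have hcs : k ≤ ((Finset.Icc (1 : ℤ) n).filter fun i => (n : ℤ) < f i - (s - n)).card := by
      rw [Stmt0Aux.count_eq_Sm n f (s - n),
        Stmt0Aux.Sm_const n hn f (s - n) (hbnd (s - n) (le_refl _) (by omega)) n (a + n)]
      have hS : Stmt0Aux.Sm n f (s - n) (a + n)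
          = (Finset.Ioc a (a + n)).filter (fun j => a + s < f j) := by
        ext j
        simp only [Stmt0Aux.Sm, Finset.mem_filter, Finset.mem_Ioc]
        constructor
        · rintro ⟨⟨h1, h2⟩, h3⟩; exact ⟨⟨by omega, h2⟩, by omega⟩
        · rintro ⟨⟨h1, h2⟩, h3⟩; exact ⟨⟨by omega, h2⟩, by omega⟩
      set A' : Finset ℤ := (Finset.Ioc a (a + n)).filter (fun j => ¬ (a + s < f j)) with hA'def
      have hpart : ((Finset.Ioc a (a + n)).filter (fun j => a + s < f j)).card + A'.card = n := by
        rw [hA'def, Finset.card_filter_add_card_filter_not, Int.card_Ioc]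
        omega
      have hsubA : A' ⊆ FA := by
        intro j hj
        rw [hA'def, Finset.mem_filter, Finset.mem_Ioc] at hj
        obtain ⟨⟨h1, h2⟩, h3⟩ := hj
        rw [hFA]
        refine ⟨h1, ?_⟩
        rcases lt_or_eq_of_le (by omega : f j ≤ f a) with h4 | h4
        · exact h4
        · exfalso
          have : j = a := f.injective h4
          omega
      have hA'card : A'.card ≤ n - k := le_trans (Finset.card_le_card hsubA) hFAcard
      rw [hS]
      omega
    -- intermediate value
    obtain ⟨m, hm1, hm2, hm3⟩ := Stmt0Aux.ivt k
      (fun m => ((Finset.Icc (1 : ℤ) n).filter fun i => (n : ℤ) < f i - m).card)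
      (fun z => Stmt0Aux.cstep n f z)
      (t - (s - n)).toNat (s - n) t (by omega) (le_refl _) hct hcs
    refine ⟨m, ?_, hm3⟩
    intro i
    have := hbnd m hm1 hm2 i
    constructor <;> omega
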